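/- If X is a topological space with a network of cardinality ≤ κ (κ infinite) and G is a second-countable topological group, then the space C_p(X,G) of continuous functions X → G with the topology of pointwise convergence has a network of cardinality ≤ κ; i.e., nw(C_p(X,G)) ≤ nw(X) when nw(X) is infinite. -/

import Mathlib

open Cardinal

universe u

/-- A network for a topological space. -/
def IsNetwork {Y : Type*} [TopologicalSpace Y] (N : Set (Set Y)) : Prop :=
  ∀ y : Y, ∀ U : Set Y, IsOpen U → y ∈ U → ∃ M ∈ N, y ∈ M ∧ M ⊆ U

/-- If `X` has a network of cardinality `≤ κ` (`κ` infinite) and `G` is a second-countable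
topological group, then `C_p(X,G)` (continuous functions with the topology of pointwise
convergence, i.e. the subspace topology from the product `G^X`) has a network of
cardinality `≤ κ`. -/
theorem stmt_13 {X G : Type u} [TopologicalSpace X] [TopologicalSpace G]
    [Group G] [IsTopologicalGroup G] [SecondCountableTopology G]
    (κ : Cardinal.{u}) (hκ : ℵ₀ ≤ κ)
    (N : Set (Set X)) (hN : IsNetwork N) (hNκ : #N ≤ κ) :
    ∃ M : Set (Set {f : X → G // Continuous f}),
      IsNetwork M ∧ #M ≤ κ := by
  classical
  set B : Set (Set G) := TopologicalSpace.countableBasis G with hBdef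
  have hBbasis := TopologicalSpace.isBasis_countableBasis G
  have hBcount := TopologicalSpace.countable_countableBasis G
  let F : Finset (↥N × ↥B) → Set {f : X → G // Continuous f} :=
    fun s => {g | ∀ p ∈ s, ∀ x ∈ (p.1 : Set X), g.1 x ∈ (p.2 : Set G)}
  refine ⟨Set.range F, ?_, ?_⟩
  · intro f U hU hfU
    obtain ⟨V, hV, rfl⟩ := isOpen_induced_iff.mp hU
    obtain ⟨I, u, hu, hsub⟩ := isOpen_pi_iff.mp hV f.1 hfU
    have hx : ∀ x : X, x ∈ I → ∃ (b : Set G) (n : Set X), b ∈ B ∧ n ∈ N ∧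
        b ⊆ u x ∧ x ∈ n ∧ n ⊆ f.1 ⁻¹' b := by
      intro x hxI
      obtain ⟨huo, hfu⟩ := hu x hxI
      obtain ⟨b, hbB, hfb, hbu⟩ := hBbasis.exists_subset_of_mem_open hfu huo
      obtain ⟨n, hnN, hxn, hnsub⟩ := hN x (f.1 ⁻¹' b) (hBbasis.isOpen hbB |>.preimage f.2) hfb
      exact ⟨b, n, hbB, hnN, hbu, hxn, hnsub⟩
    choose! b n hbB hnN hbu hxn hnb using hx
    refine ⟨F (I.attach.image (fun x => (⟨n x.1, hnN _ x.2⟩, ⟨b x.1, hbB _ x.2⟩))),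
      ⟨_, rfl⟩, ?_, ?_⟩
    · intro p hp y hy
      simp only [Finset.mem_image, Finset.mem_attach, true_and] at hp
      obtain ⟨x, hxeq⟩ := hp
      subst hxeq
      exact hnb _ x.2 hy
    · intro g hg
      apply hsub
      intro x hxI
      have := hg (⟨n x, hnN _ hxI⟩, ⟨b x, hbB _ hxI⟩)
        (Finset.mem_image.mpr ⟨⟨x, hxI⟩, Finset.mem_attach _ _, rfl⟩) x (hxn _ hxI)
      exact hbu _ hxI this
  · refine le_trans mk_range_le ?_
    have hB0 : #↥B ≤ ℵ₀ := by
      have := hBcount.to_subtype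
      exact Cardinal.mk_le_aleph0
    have hprod : #(↥N × ↥B) ≤ κ := by
      rw [Cardinal.mk_prod]
      simp only [Cardinal.lift_id]
      calc #↥N * #↥B ≤ κ * ℵ₀ := mul_le_mul' hNκ hB0
        _ = κ := Cardinal.mul_aleph0_eq hκ
    rcases finite_or_infinite (↥N × ↥B) with h | h
    · have : Countable (Finset (↥N × ↥B)) := inferInstance
      exact Cardinal.mk_le_aleph0.trans hκ
    · rw [Cardinal.mk_finset_of_infinite]
      exact hprod
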